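/- For real z with 0 ≤ z < 1, ∑_{n=0}^{∞} C(2n,n)^2 (z/4)^{2n} = (2/π) K(z), where K(k) = ∫_0^{π/2} dθ / √(1 − k² sin²θ) is the complete elliptic integral of the first kind. -/

import Mathlib

open Finset Real

noncomputable def cb (n : ℕ) : ℝ := (Nat.centralBinom n : ℝ) / 4 ^ n

lemma cb_zero : cb 0 = 1 := by simp [cb, Nat.centralBinom]

lemma cb_pos (n : ℕ) : 0 < cb n :=
  div_pos (by exact_mod_cast n.centralBinom_pos) (by positivity)

lemma cb_rec (n : ℕ) : (2 * (n : ℝ) + 2) * cb (n + 1) = (2 * n + 1) * cb n := by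
  have h := Nat.succ_mul_centralBinom_succ n
  have h' : ((n : ℝ) + 1) * (Nat.centralBinom (n + 1) : ℝ)
      = 2 * (2 * n + 1) * (Nat.centralBinom n : ℝ) := by exact_mod_cast congrArg Nat.cast h
  have h4 : (4 : ℝ) ^ (n + 1) = 4 * 4 ^ n := by ring
  simp only [cb, h4]
  rw [mul_div_assoc', mul_div_assoc', div_eq_div_iff (by positivity) (by positivity)]
  linear_combination (2 * (4 : ℝ) ^ n) * h'

lemma cb_le_one (n : ℕ) : cb n ≤ 1 := by
  induction n with
  | zero => simp [cb_zero]
  | succ k ih =>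
      have hrec := cb_rec k
      have hk : (0 : ℝ) ≤ (k : ℝ) := Nat.cast_nonneg k
      nlinarith [cb_pos k, cb_pos (k + 1)]

lemma cb_conv (n : ℕ) : ∑ k ∈ range (n + 1), cb k * cb (n - k) = 1 := by
  induction n with
  | zero => simp [cb_zero]
  | succ n ih =>
      set S : ℕ → ℝ := fun m => ∑ k ∈ range (m + 1), cb k * cb (m - k) with hS
      have refl1 : ∑ k ∈ range (n + 2), ((n + 1 - k : ℕ) : ℝ) * (cb k * cb (n + 1 - k))
          = ∑ k ∈ range (n + 2), (k : ℝ) * (cb k * cb (n + 1 - k)) := by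
        rw [← Finset.sum_range_reflect]
        refine Finset.sum_congr rfl fun k hk => ?_
        rw [Finset.mem_range] at hk
        have e1 : n + 2 - 1 - k = n + 1 - k := by omega
        have e2 : n + 1 - (n + 1 - k) = k := by omega
        rw [e1, e2]; ring
      have refl2 : ∑ j ∈ range (n + 1), ((n - j : ℕ) : ℝ) * (cb j * cb (n - j))
          = ∑ j ∈ range (n + 1), (j : ℝ) * (cb j * cb (n - j)) := by
        rw [← Finset.sum_range_reflect]
        refine Finset.sum_congr rfl fun j hj => ?_
        rw [Finset.mem_range] at hj
        have e1 : n + 1 - 1 - j = n - j := by omega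
        have e2 : n - (n - j) = j := by omega
        rw [e1, e2]; ring
      have twosum : 2 * (∑ j ∈ range (n + 1), (j : ℝ) * (cb j * cb (n - j)))
          = (n : ℝ) * S n := by
        rw [two_mul]
        nth_rewrite 1 [← refl2]
        rw [hS, Finset.mul_sum, ← Finset.sum_add_distrib]
        refine Finset.sum_congr rfl fun j hj => ?_
        rw [Finset.mem_range] at hj
        have : ((n - j : ℕ) : ℝ) = (n : ℝ) - j := by rw [Nat.cast_sub (by omega)]
        rw [this]; ring
      have key : ((n : ℝ) + 1) * S (n + 1) = ((n : ℝ) + 1) * S n := by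
        calc ((n : ℝ) + 1) * S (n + 1)
            = ∑ k ∈ range (n + 2), ((k : ℝ) + ((n + 1 - k : ℕ) : ℝ)) * (cb k * cb (n + 1 - k)) := by
              rw [hS, Finset.mul_sum]
              refine Finset.sum_congr rfl fun k hk => ?_
              rw [Finset.mem_range] at hk
              have : ((n + 1 - k : ℕ) : ℝ) = ((n : ℝ) + 1) - k := by
                rw [Nat.cast_sub (by omega : k ≤ n + 1)]; push_cast; ring
              rw [this]; ring
          _ = 2 * ∑ k ∈ range (n + 2), (k : ℝ) * (cb k * cb (n + 1 - k)) := by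
              simp_rw [add_mul]
              rw [Finset.sum_add_distrib, refl1]; ring
          _ = ∑ k ∈ range (n + 2), (2 * (k : ℝ)) * (cb k * cb (n + 1 - k)) := by
              rw [Finset.mul_sum]
              exact Finset.sum_congr rfl fun k _ => by ring
          _ = ∑ j ∈ range (n + 1), (2 * ((j : ℝ) + 1)) * (cb (j + 1) * cb (n - j)) := by
              rw [Finset.sum_range_succ']
              simp only [Nat.cast_zero, mul_zero, zero_mul, add_zero, Nat.succ_sub_succ]
              refine Finset.sum_congr rfl fun j _ => ?_
              push_cast
              ring
          _ = ∑ j ∈ range (n + 1), (2 * (j : ℝ) + 1) * (cb j * cb (n - j)) := by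
              refine Finset.sum_congr rfl fun j _ => ?_
              linear_combination cb (n - j) * cb_rec j
          _ = 2 * (∑ j ∈ range (n + 1), (j : ℝ) * (cb j * cb (n - j))) + S n := by
              rw [hS, Finset.mul_sum, ← Finset.sum_add_distrib]
              exact Finset.sum_congr rfl fun j _ => by ring
          _ = (n : ℝ) * S n + S n := by rw [twosum]
          _ = ((n : ℝ) + 1) * S n := by ring
      have hpos : ((n : ℝ) + 1) ≠ 0 := by positivity
      have : S (n + 1) = S n := by
        exact mul_left_cancel₀ hpos key
      exact this.trans ih

lemma cb_nonneg (n : ℕ) : 0 ≤ cb n := (cb_pos n).le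

lemma cb_summable {x : ℝ} (h0 : 0 ≤ x) (h1 : x < 1) :
    Summable fun n => cb n * x ^ n := by
  refine Summable.of_nonneg_of_le (fun n => mul_nonneg (cb_nonneg n) (pow_nonneg h0 n))
    (fun n => ?_) (summable_geometric_of_lt_one h0 h1)
  calc cb n * x ^ n ≤ 1 * x ^ n := by
        have := cb_le_one n
        have : (0:ℝ) ≤ x ^ n := by positivity
        nlinarith [cb_le_one n]
    _ = x ^ n := one_mul _

lemma cb_tsum {x : ℝ} (h0 : 0 ≤ x) (h1 : x < 1) :
    ∑' n, cb n * x ^ n = 1 / Real.sqrt (1 - x) := by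
  set f : ℕ → ℝ := fun n => cb n * x ^ n with hf
  have hsum : Summable f := cb_summable h0 h1
  have hnorm : Summable fun n => ‖f n‖ := by
    simpa [Real.norm_eq_abs] using hsum.abs
  have hsq : (∑' n, f n) * (∑' n, f n) = (1 - x)⁻¹ := by
    rw [tsum_mul_tsum_eq_tsum_sum_range_of_summable_norm hnorm hnorm]
    have : ∀ n : ℕ, ∑ k ∈ range (n + 1), f k * f (n - k) = x ^ n := by
      intro n
      calc ∑ k ∈ range (n + 1), f k * f (n - k)
          = ∑ k ∈ range (n + 1), (cb k * cb (n - k)) * x ^ n := by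
            refine Finset.sum_congr rfl fun k hk => ?_
            rw [Finset.mem_range] at hk
            rw [hf]
            have : x ^ k * x ^ (n - k) = x ^ n := by
              rw [← pow_add]; congr 1; omega
            calc cb k * x ^ k * (cb (n - k) * x ^ (n - k))
                = cb k * cb (n - k) * (x ^ k * x ^ (n - k)) := by ring
              _ = cb k * cb (n - k) * x ^ n := by rw [this]
        _ = (∑ k ∈ range (n + 1), cb k * cb (n - k)) * x ^ n := by
            rw [Finset.sum_mul]
        _ = x ^ n := by rw [cb_conv n, one_mul]
    rw [tsum_congr this, tsum_geometric_of_lt_one h0 h1]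
  have hx1 : (0:ℝ) < 1 - x := by linarith
  have hpos : 0 ≤ ∑' n, f n :=
    tsum_nonneg fun n => mul_nonneg (cb_nonneg n) (pow_nonneg h0 n)
  have h' : Real.sqrt ((1 - x)⁻¹) = ∑' n, f n := by
    rw [← hsq, Real.sqrt_mul_self hpos]
  rw [← h', Real.sqrt_inv, one_div]

lemma wallis_cb (n : ℕ) :
    ∫ θ in (0:ℝ)..(Real.pi / 2), Real.sin θ ^ (2 * n) = Real.pi / 2 * cb n := by
  induction n with
  | zero => simp [cb_zero]
  | succ k ih =>
      have h2 : 2 * (k + 1) = 2 * k + 2 := by ring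
      rw [h2, integral_sin_pow]
      rw [Real.sin_zero, Real.cos_pi_div_two, ih]
      push_cast
      have hrec := cb_rec k
      have hk : (0:ℝ) < 2 * (k:ℝ) + 2 := by positivity
      field_simp
      rw [zero_pow (by omega : 2 * k + 1 ≠ 0)]
      simp only [zero_mul, mul_zero, sub_zero, add_zero, zero_add]
      nlinarith [hrec, Real.pi_pos]

lemma ellipticK_series (z : ℝ) (h0 : 0 ≤ z) (h1 : z < 1) :
    (∫ θ in (0:ℝ)..(Real.pi / 2), 1 / Real.sqrt (1 - z ^ 2 * Real.sin θ ^ 2))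
      = Real.pi / 2 * ∑' n, cb n ^ 2 * z ^ (2 * n) := by
  have hz0 : (0:ℝ) ≤ z ^ 2 := sq_nonneg z
  have hz2 : z ^ 2 < 1 := by nlinarith
  have hpi2 : (0:ℝ) ≤ Real.pi / 2 := by positivity
  set f : ℕ → ℝ → ℝ := fun n θ => cb n * (z ^ 2 * Real.sin θ ^ 2) ^ n with hfdef
  -- pointwise expansion
  have hpt : ∀ θ : ℝ, 1 / Real.sqrt (1 - z ^ 2 * Real.sin θ ^ 2) = ∑' n, f n θ := by
    intro θ
    have hx0 : (0:ℝ) ≤ z ^ 2 * Real.sin θ ^ 2 :=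
      mul_nonneg hz0 (sq_nonneg _)
    have hx1 : z ^ 2 * Real.sin θ ^ 2 < 1 := by
      have hs : Real.sin θ ^ 2 ≤ 1 := Real.sin_sq_le_one θ
      nlinarith
    rw [cb_tsum hx0 hx1]
  have hmeas : ∀ n, MeasureTheory.AEStronglyMeasurable (f n)
      (MeasureTheory.volume.restrict (Set.Ioc 0 (Real.pi / 2))) := by
    intro n
    exact (Continuous.aestronglyMeasurable (by fun_prop))
  have hb : ∀ n θ, (‖f n θ‖₊ : ENNReal) ≤ ENNReal.ofReal (cb n * (z ^ 2) ^ n) := by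
    intro n θ
    rw [← enorm_eq_nnnorm, ← ofReal_norm]
    apply ENNReal.ofReal_le_ofReal
    have hx0 : (0:ℝ) ≤ z ^ 2 * Real.sin θ ^ 2 := mul_nonneg hz0 (sq_nonneg _)
    have h1' : (z ^ 2 * Real.sin θ ^ 2) ^ n ≤ (z ^ 2) ^ n := by
      apply pow_le_pow_left₀ hx0
      nlinarith [Real.sin_sq_le_one θ, sq_nonneg (Real.sin θ)]
    have hfeq : f n θ = cb n * (z ^ 2 * Real.sin θ ^ 2) ^ n := rfl
    rw [Real.norm_eq_abs, hfeq, abs_of_nonneg (mul_nonneg (cb_nonneg n) (pow_nonneg hx0 n))]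
    exact mul_le_mul_of_nonneg_left h1' (cb_nonneg n)
  have hsum2 : Summable fun n => cb n * (z ^ 2) ^ n * (Real.pi / 2) :=
    (cb_summable hz0 hz2).mul_right _
  have hfin : (∑' n, ∫⁻ θ in Set.Ioc 0 (Real.pi / 2), ‖f n θ‖₊) ≠ ⊤ := by
    have bnd : ∀ n, (∫⁻ θ in Set.Ioc 0 (Real.pi / 2), ‖f n θ‖₊)
        ≤ ENNReal.ofReal (cb n * (z ^ 2) ^ n * (Real.pi / 2)) := by
      intro n
      calc (∫⁻ θ in Set.Ioc 0 (Real.pi / 2), ‖f n θ‖₊)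
          ≤ ∫⁻ _ in Set.Ioc 0 (Real.pi / 2), ENNReal.ofReal (cb n * (z ^ 2) ^ n) :=
            MeasureTheory.lintegral_mono fun θ => hb n θ
        _ = ENNReal.ofReal (cb n * (z ^ 2) ^ n)
            * MeasureTheory.volume (Set.Ioc (0:ℝ) (Real.pi / 2)) := by
            rw [MeasureTheory.setLIntegral_const]
        _ = ENNReal.ofReal (cb n * (z ^ 2) ^ n * (Real.pi / 2)) := by
            rw [Real.volume_Ioc, sub_zero, ENNReal.ofReal_mul
              (mul_nonneg (cb_nonneg n) (pow_nonneg hz0 n))]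
    refine ne_top_of_le_ne_top ?_ (ENNReal.tsum_le_tsum bnd)
    rw [← ENNReal.ofReal_tsum_of_nonneg
      (fun n => mul_nonneg (mul_nonneg (cb_nonneg n) (pow_nonneg hz0 n)) hpi2) hsum2]
    exact ENNReal.ofReal_ne_top
  have hint : ∀ n, (∫ θ in Set.Ioc (0:ℝ) (Real.pi / 2), f n θ)
      = Real.pi / 2 * (cb n ^ 2 * z ^ (2 * n)) := by
    intro n
    rw [← intervalIntegral.integral_of_le hpi2]
    have : ∀ θ : ℝ, f n θ = cb n * z ^ (2 * n) * Real.sin θ ^ (2 * n) := by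
      intro θ
      show cb n * (z ^ 2 * Real.sin θ ^ 2) ^ n = _
      rw [mul_pow, ← pow_mul, ← pow_mul]
      ring
    simp_rw [this]
    rw [intervalIntegral.integral_const_mul, wallis_cb n]
    ring
  calc (∫ θ in (0:ℝ)..(Real.pi / 2), 1 / Real.sqrt (1 - z ^ 2 * Real.sin θ ^ 2))
      = ∫ θ in (0:ℝ)..(Real.pi / 2), ∑' n, f n θ := by
        exact intervalIntegral.integral_congr fun θ _ => hpt θ
    _ = ∫ θ in Set.Ioc (0:ℝ) (Real.pi / 2), ∑' n, f n θ :=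
        intervalIntegral.integral_of_le hpi2
    _ = ∑' n, ∫ θ in Set.Ioc (0:ℝ) (Real.pi / 2), f n θ :=
        MeasureTheory.integral_tsum hmeas hfin
    _ = ∑' n, Real.pi / 2 * (cb n ^ 2 * z ^ (2 * n)) := tsum_congr hint
    _ = Real.pi / 2 * ∑' n, cb n ^ 2 * z ^ (2 * n) := tsum_mul_left

/-- Complete elliptic integral of the first kind. -/
noncomputable def ellipticK (k : ℝ) : ℝ :=
  ∫ θ in (0 : ℝ)..(Real.pi / 2), 1 / Real.sqrt (1 - k ^ 2 * Real.sin θ ^ 2)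

theorem central_binom_sq_genfun (z : ℝ) (h0 : 0 ≤ z) (h1 : z < 1) :
    ∑' n : ℕ, ((2 * n).choose n : ℝ) ^ 2 * (z / 4) ^ (2 * n) =
      (2 / Real.pi) * ellipticK z := by
  have hterm : ∀ n : ℕ, ((2 * n).choose n : ℝ) ^ 2 * (z / 4) ^ (2 * n)
      = cb n ^ 2 * z ^ (2 * n) := by
    intro n
    have hc : cb n = ((2 * n).choose n : ℝ) / 4 ^ n := by
      rw [cb, Nat.centralBinom_eq_two_mul_choose]
    have h16 : ((4 : ℝ) ^ n) ^ 2 = 4 ^ (2 * n) := by rw [← pow_mul, mul_comm]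
    rw [hc, div_pow, div_pow, ← h16]
    ring
  rw [tsum_congr hterm, ellipticK, ellipticK_series z h0 h1, ← mul_assoc]
  have hpi : 2 / Real.pi * (Real.pi / 2) = 1 := by
    field_simp
  rw [hpi, one_mul]
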